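/- arXiv:2605.22507 — 2 statements merged into one kernel-verified Lean document; each statement's English description precedes it below -/
import Mathlib

section
/- Let Ω ⊂ ℝ^d be a nonempty compact convex set, let μ_src and μ_tgt be Borel probability measures supported in Ω, and let H ∈ ℕ. Suppose (W⋆_0, W⋆_1) is a pair of continuous functions on Ω that is feasible and optimal for the static dual problem on Ω, and that moreover W⋆_0 = T_1 W⋆_1 on all of Ω. For h = 0,…,H+1, define V_h := T_{1 − h/(H+1)} W⋆_1. Then (V_0,…,V_{H+1}) is feasible and optimal for the dynamic dual LP on Ω with horizon H. -/
open MeasureTheory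

/-- The `s`-scaled Bellman operator on a set `Ω`:
`(T_s f)(x) = min_{y ∈ Ω} { ‖x−y‖²/(2s) + f(y) }` for `s > 0`, and `T_0 f = f`. -/
noncomputable def bellman {d : ℕ} (Ω : Set (EuclideanSpace ℝ (Fin d))) (s : ℝ)
    (f : EuclideanSpace ℝ (Fin d) → ℝ) (x : EuclideanSpace ℝ (Fin d)) : ℝ :=
  if s = 0 then f x else sInf ((fun y => ‖x - y‖ ^ 2 / (2 * s) + f y) '' Ω)

/-- Feasibility for the dynamic dual LP on `Ω` with horizon `H'`. -/
def DynDualFeasible {d : ℕ} (Ω : Set (EuclideanSpace ℝ (Fin d))) (H' : ℕ)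
    (V : ℕ → EuclideanSpace ℝ (Fin d) → ℝ) : Prop :=
  (∀ h ≤ H' + 1, ContinuousOn (V h) Ω) ∧
  ∀ h ≤ H', ∀ x ∈ Ω, ∀ y ∈ Ω,
    V h x ≤ ((H' : ℝ) + 1) / 2 * ‖x - y‖ ^ 2 + V (h + 1) y

/-- Feasibility for the static dual problem on `Ω`. -/
def StaticDualFeasible {d : ℕ} (Ω : Set (EuclideanSpace ℝ (Fin d)))
    (W₀ W₁ : EuclideanSpace ℝ (Fin d) → ℝ) : Prop :=
  ContinuousOn W₀ Ω ∧ ContinuousOn W₁ Ω ∧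
  ∀ x ∈ Ω, ∀ y ∈ Ω, W₀ x ≤ 1 / 2 * ‖x - y‖ ^ 2 + W₁ y

lemma bellman_zero {d : ℕ} (Ω : Set (EuclideanSpace ℝ (Fin d)))
    (f : EuclideanSpace ℝ (Fin d) → ℝ) : bellman Ω 0 f = f := by
  funext x; simp [bellman]

lemma bellman_min {d : ℕ} (Ω : Set (EuclideanSpace ℝ (Fin d))) (hne : Ω.Nonempty)
    (hcomp : IsCompact Ω) {s : ℝ} (hs : 0 < s)
    {f : EuclideanSpace ℝ (Fin d) → ℝ} (hf : ContinuousOn f Ω) (x : EuclideanSpace ℝ (Fin d)) :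
    ∃ y ∈ Ω, bellman Ω s f x = ‖x - y‖ ^ 2 / (2 * s) + f y ∧
      ∀ y' ∈ Ω, bellman Ω s f x ≤ ‖x - y'‖ ^ 2 / (2 * s) + f y' := by
  set φ : EuclideanSpace ℝ (Fin d) → ℝ := fun y => ‖x - y‖ ^ 2 / (2 * s) + f y with hφdef
  have hφ : ContinuousOn φ Ω :=
    (((continuous_const.sub continuous_id).norm.pow 2).div_const _).continuousOn.add hf
  obtain ⟨y, hyΩ, hy⟩ := hcomp.exists_isMinOn hne hφ
  have hleast : IsLeast (φ '' Ω) (φ y) :=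
    ⟨⟨y, hyΩ, rfl⟩, by rintro _ ⟨y', hy', rfl⟩; exact isMinOn_iff.mp hy y' hy'⟩
  have hb : bellman Ω s f x = φ y := by
    rw [bellman, if_neg hs.ne', hleast.csInf_eq]
  refine ⟨y, hyΩ, hb, fun y' hy' => ?_⟩
  rw [hb]
  exact isMinOn_iff.mp hy y' hy'

lemma bellman_continuousOn {d : ℕ} (Ω : Set (EuclideanSpace ℝ (Fin d))) (hne : Ω.Nonempty)
    (hcomp : IsCompact Ω) {s : ℝ} (hs : 0 < s)
    {f : EuclideanSpace ℝ (Fin d) → ℝ} (hf : ContinuousOn f Ω) :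
    ContinuousOn (bellman Ω s f) Ω := by
  obtain ⟨C, hC⟩ := Metric.isBounded_iff.mp hcomp.isBounded
  have hC0 : 0 ≤ C := le_trans (by simp) (hC hne.choose_spec hne.choose_spec)
  have key : ∀ x₁ ∈ Ω, ∀ x₂ ∈ Ω,
      bellman Ω s f x₁ - bellman Ω s f x₂ ≤ 2 * C / s * dist x₁ x₂ := by
    intro x₁ h₁ x₂ h₂
    obtain ⟨y, hyΩ, hy2, _⟩ := bellman_min Ω hne hcomp hs hf x₂
    obtain ⟨_, _, _, hy1'⟩ := bellman_min Ω hne hcomp hs hf x₁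
    have h1 := hy1' y hyΩ
    have hC1 : ‖x₁ - y‖ ≤ C := by rw [← dist_eq_norm]; exact hC h₁ hyΩ
    have hC2 : ‖x₂ - y‖ ≤ C := by rw [← dist_eq_norm]; exact hC h₂ hyΩ
    have hDC : dist x₁ x₂ ≤ C := hC h₁ h₂
    have hd : ‖x₁ - y‖ ≤ ‖x₂ - y‖ + dist x₁ x₂ := by
      rw [dist_eq_norm]
      calc ‖x₁ - y‖ = ‖(x₁ - x₂) + (x₂ - y)‖ := by rw [sub_add_sub_cancel]
        _ ≤ ‖x₁ - x₂‖ + ‖x₂ - y‖ := norm_add_le _ _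
        _ = ‖x₂ - y‖ + ‖x₁ - x₂‖ := by ring
    have hn1 : 0 ≤ ‖x₁ - y‖ := norm_nonneg _
    have hn2 : 0 ≤ ‖x₂ - y‖ := norm_nonneg _
    have hD0 : 0 ≤ dist x₁ x₂ := dist_nonneg
    rw [hy2] at *
    have hsq : ‖x₁ - y‖ ^ 2 - ‖x₂ - y‖ ^ 2 ≤ 4 * C * dist x₁ x₂ := by nlinarith
    have : ‖x₁ - y‖ ^ 2 / (2 * s) - ‖x₂ - y‖ ^ 2 / (2 * s) ≤ 2 * C / s * dist x₁ x₂ := by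
      rw [div_sub_div_same, div_le_iff₀ (by positivity)]
      calc ‖x₁ - y‖ ^ 2 - ‖x₂ - y‖ ^ 2 ≤ 4 * C * dist x₁ x₂ := hsq
        _ = 2 * C / s * dist x₁ x₂ * (2 * s) := by field_simp; ring
    linarith [h1]
  have hlip : LipschitzOnWith (Real.toNNReal (2 * C / s)) (bellman Ω s f) Ω := by
    apply LipschitzOnWith.of_dist_le_mul
    intro x₁ h₁ x₂ h₂
    rw [Real.dist_eq, abs_sub_le_iff]
    have hK : 2 * C / s ≤ (Real.toNNReal (2 * C / s) : ℝ) := Real.le_coe_toNNReal _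
    constructor
    · exact le_trans (key x₁ h₁ x₂ h₂) (mul_le_mul_of_nonneg_right hK dist_nonneg)
    · rw [dist_comm]
      exact le_trans (key x₂ h₂ x₁ h₁) (mul_le_mul_of_nonneg_right hK dist_nonneg)
  exact hlip.continuousOn

lemma three_point {E : Type*} [NormedAddCommGroup E] (x y z : E) {t u : ℝ}
    (ht : 0 < t) (hu : 0 < u) :
    ‖x - z‖ ^ 2 / (2 * (t + u)) ≤ ‖x - y‖ ^ 2 / (2 * t) + ‖y - z‖ ^ 2 / (2 * u) := by
  have habc : ‖x - z‖ ≤ ‖x - y‖ + ‖y - z‖ := by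
    calc ‖x - z‖ = ‖(x - y) + (y - z)‖ := by rw [sub_add_sub_cancel]
      _ ≤ ‖x - y‖ + ‖y - z‖ := norm_add_le _ _
  set a := ‖x - y‖; set b := ‖y - z‖; set c := ‖x - z‖
  have ha : 0 ≤ a := norm_nonneg _
  have hb : 0 ≤ b := norm_nonneg _
  have hc : 0 ≤ c := norm_nonneg _
  rw [div_add_div _ _ (by positivity) (by positivity), div_le_div_iff₀ (by positivity) (by positivity)]
  have hcab : c ^ 2 ≤ (a + b) ^ 2 := by nlinarith
  nlinarith [hcab, sq_nonneg (u * a - t * b), mul_pos ht hu]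

/-- from an optimal static dual pair `(W⋆_0, W⋆_1)` with `W⋆_0 = T_1 W⋆_1` on
`Ω`, the family `V_h := T_{1 − h/(H+1)} W⋆_1` is feasible and optimal for the dynamic dual
LP on `Ω` with horizon `H`. -/
theorem stmt16 {d : ℕ} (Ω : Set (EuclideanSpace ℝ (Fin d)))
    (hne : Ω.Nonempty) (hcomp : IsCompact Ω) (hconv : Convex ℝ Ω)
    (μsrc μtgt : Measure (EuclideanSpace ℝ (Fin d)))
    [IsProbabilityMeasure μsrc] [IsProbabilityMeasure μtgt]
    (hsrc : μsrc Ωᶜ = 0) (htgt : μtgt Ωᶜ = 0) (H : ℕ)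
    (W₀ W₁ : EuclideanSpace ℝ (Fin d) → ℝ)
    (hWfeas : StaticDualFeasible Ω W₀ W₁)
    (hWopt : ∀ U₀ U₁, StaticDualFeasible Ω U₀ U₁ →
      ∫ x, U₀ x ∂μsrc - ∫ x, U₁ x ∂μtgt ≤ ∫ x, W₀ x ∂μsrc - ∫ x, W₁ x ∂μtgt)
    (hW₀ : ∀ x ∈ Ω, W₀ x = bellman Ω 1 W₁ x) :
    DynDualFeasible Ω H (fun h => bellman Ω (1 - (h : ℝ) / ((H : ℝ) + 1)) W₁) ∧
    ∀ U : ℕ → EuclideanSpace ℝ (Fin d) → ℝ, DynDualFeasible Ω H U →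
      ∫ x, U 0 x ∂μsrc - ∫ x, U (H + 1) x ∂μtgt ≤
        ∫ x, bellman Ω (1 - (0 : ℝ) / ((H : ℝ) + 1)) W₁ x ∂μsrc -
          ∫ x, bellman Ω (1 - ((H : ℝ) + 1) / ((H : ℝ) + 1)) W₁ x ∂μtgt := by
  have hW₁c : ContinuousOn W₁ Ω := hWfeas.2.1
  have hN : (0:ℝ) < (H:ℝ) + 1 := by positivity
  constructor
  · constructor
    · -- continuity
      intro h hh
      show ContinuousOn (bellman Ω (1 - (h:ℝ) / ((H:ℝ) + 1)) W₁) Ω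
      by_cases hs0 : (1 - (h:ℝ) / ((H:ℝ) + 1)) = 0
      · rw [hs0, bellman_zero]; exact hW₁c
      · have hle : (h:ℝ) ≤ (H:ℝ) + 1 := by exact_mod_cast (by exact_mod_cast hh : h ≤ H + 1)
        have hnn : 0 ≤ 1 - (h:ℝ) / ((H:ℝ) + 1) := by
          have : (h:ℝ) / ((H:ℝ) + 1) ≤ 1 := by
            rw [div_le_one hN]; exact hle
          linarith
        exact bellman_continuousOn Ω hne hcomp (lt_of_le_of_ne hnn (Ne.symm hs0)) hW₁c
    · -- constraint
      intro h hh x hx y hy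
      show bellman Ω (1 - (h:ℝ) / ((H:ℝ) + 1)) W₁ x ≤
        ((H:ℝ) + 1) / 2 * ‖x - y‖ ^ 2 + bellman Ω (1 - ((h + 1 : ℕ):ℝ) / ((H:ℝ) + 1)) W₁ y
      have hhle : (h:ℝ) ≤ (H:ℝ) := by exact_mod_cast hh
      have hsh : 0 < 1 - (h:ℝ) / ((H:ℝ) + 1) := by
        have : (h:ℝ) / ((H:ℝ) + 1) < 1 := by rw [div_lt_one hN]; linarith
        linarith
      obtain ⟨_, _, _, hub⟩ := bellman_min Ω hne hcomp hsh hW₁c x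
      by_cases hlast : h = H
      · subst hlast
        have hz : (1 - ((h:ℕ) + 1 : ℕ) / ((h:ℝ) + 1) : ℝ) = 0 := by push_cast; field_simp; norm_num
        have hV1 : bellman Ω (1 - ((h + 1 : ℕ) : ℝ) / ((h:ℝ) + 1)) W₁ y = W₁ y := by
          rw [show (1 - (((h + 1 : ℕ)) : ℝ) / ((h:ℝ) + 1)) = 0 by push_cast; field_simp; norm_num,
            bellman_zero]
        have hsval : (1 - (h:ℝ) / ((h:ℝ) + 1)) = 1 / ((h:ℝ) + 1) := by
          field_simp
          ring
        have := hub y hy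
        rw [hsval] at this
        have hcalc : ‖x - y‖ ^ 2 / (2 * (1 / ((h:ℝ) + 1))) = ((h:ℝ) + 1) / 2 * ‖x - y‖ ^ 2 := by
          field_simp
        simp only [hV1]
        rw [hsval]
        linarith [hcalc ▸ this]
      · have hh1 : (h:ℝ) + 1 ≤ (H:ℝ) := by
          have : h + 1 ≤ H := by omega
          exact_mod_cast this
        have hs' : 0 < 1 - ((h:ℝ) + 1) / ((H:ℝ) + 1) := by
          have : ((h:ℝ) + 1) / ((H:ℝ) + 1) < 1 := by rw [div_lt_one hN]; linarith
          linarith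
        obtain ⟨z, hzΩ, hz2, _⟩ := bellman_min Ω hne hcomp hs' hW₁c y
        have hubz := hub z hzΩ
        have htp := three_point x y z (t := 1 / ((H:ℝ) + 1))
          (u := 1 - ((h:ℝ) + 1) / ((H:ℝ) + 1)) (by positivity) hs'
        have hsum : (1 / ((H:ℝ) + 1) + (1 - ((h:ℝ) + 1) / ((H:ℝ) + 1))) =
            1 - (h:ℝ) / ((H:ℝ) + 1) := by field_simp; ring
        rw [hsum] at htp
        have hcalc : ‖x - y‖ ^ 2 / (2 * (1 / ((H:ℝ) + 1))) = ((H:ℝ) + 1) / 2 * ‖x - y‖ ^ 2 := by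
          field_simp
        have hcast : (((h + 1 : ℕ)) : ℝ) = (h:ℝ) + 1 := by push_cast; ring
        simp only [hcast]
        rw [hz2]
        linarith [hcalc ▸ htp]
  · -- optimality
    intro U hU
    have hstat : StaticDualFeasible Ω (U 0) (U (H + 1)) := by
      refine ⟨hU.1 0 (by omega), hU.1 (H + 1) le_rfl, ?_⟩
      intro x hx y hy
      set N : ℝ := (H:ℝ) + 1 with hNdef
      set z : ℕ → EuclideanSpace ℝ (Fin d) := fun k => x + ((k:ℝ) / N) • (y - x) with hzdef
      have hzmem : ∀ k ≤ H + 1, z k ∈ Ω := by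
        intro k hk
        have hkle : (k:ℝ) ≤ N := by
          rw [hNdef]; exact_mod_cast (by exact_mod_cast hk : k ≤ H + 1)
        have ht0 : 0 ≤ (k:ℝ) / N := by positivity
        have ht1 : (k:ℝ) / N ≤ 1 := by rw [div_le_one hN]; exact hkle
        have hzeq : z k = (1 - (k:ℝ) / N) • x + ((k:ℝ) / N) • y := by
          simp only [hzdef]; rw [smul_sub, sub_smul, one_smul]; abel
        rw [hzeq]
        exact hconv hx hy (by linarith) ht0 (by ring)
      have hstep : ∀ k : ℕ, ‖z k - z (k + 1)‖ ^ 2 = ‖x - y‖ ^ 2 / N ^ 2 := by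
        intro k
        have h1 : z k - z (k + 1) = ((k:ℝ) / N - ((k + 1 : ℕ) : ℝ) / N) • (y - x) := by
          simp only [hzdef]; rw [add_sub_add_left_eq_sub, ← sub_smul]
        have h2 : ((k:ℝ) / N - ((k + 1 : ℕ) : ℝ) / N) = -(1 / N) := by push_cast; ring
        rw [h1, h2, norm_smul, Real.norm_eq_abs, abs_neg, abs_of_pos (by positivity),
          norm_sub_rev y x]
        field_simp
      have main : ∀ k ≤ H + 1, U 0 x ≤ (k:ℝ) * (N / 2 * (‖x - y‖ ^ 2 / N ^ 2)) + U k (z k) := by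
        intro k hk
        induction k with
        | zero => simp [hzdef]
        | succ n ih =>
          have hn : n ≤ H := by omega
          have h1 := ih (by omega)
          have h2 := hU.2 n hn (z n) (hzmem n (by omega)) (z (n + 1)) (hzmem (n + 1) hk)
          rw [hstep n] at h2
          push_cast
          push_cast at h1
          rw [hNdef] at *
          linarith
      have hfin := main (H + 1) le_rfl
      have hzy : z (H + 1) = y := by
        have h1 : ((H:ℝ) + 1) / N = 1 := by rw [hNdef]; field_simp
        simp [hzdef, h1]
      rw [hzy] at hfin
      have hco : (((H + 1 : ℕ)) : ℝ) * (N / 2 * (‖x - y‖ ^ 2 / N ^ 2)) =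
          1 / 2 * ‖x - y‖ ^ 2 := by
        rw [hNdef]; push_cast; field_simp
      linarith [hco ▸ hfin]
    have hkey := hWopt (U 0) (U (H + 1)) hstat
    have e1 : ∫ x, bellman Ω (1 - (0:ℝ) / ((H:ℝ) + 1)) W₁ x ∂μsrc = ∫ x, W₀ x ∂μsrc := by
      apply integral_congr_ae
      have hae : ∀ᵐ x ∂μsrc, x ∈ Ω := by
        rw [MeasureTheory.ae_iff]
        exact hsrc
      filter_upwards [hae] with x hx
      rw [show (1 - (0:ℝ) / ((H:ℝ) + 1)) = 1 by norm_num]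
      exact (hW₀ x hx).symm
    have e2 : ∫ x, bellman Ω (1 - ((H:ℝ) + 1) / ((H:ℝ) + 1)) W₁ x ∂μtgt = ∫ x, W₁ x ∂μtgt := by
      rw [show (1 - ((H:ℝ) + 1) / ((H:ℝ) + 1)) = 0 by field_simp; norm_num, bellman_zero]
    rw [e1, e2]
    exact hkey
end

section
/- Let Ω ⊂ ℝ^d be a nonempty compact set, let f : Ω → ℝ be continuous, and let x ∈ Ω. Then: (i) for all s, s' > 0, |(T_s f)(x) − (T_{s'} f)(x)| ≤ (diam Ω)² · |s − s'| / (2 · min(s, s')²); (ii) the map s ↦ (T_s f)(x) is continuous on [0, ∞), and in particular (T_s f)(x) → f(x) as s → 0⁺. -/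
open MeasureTheory Filter

/-- helper: comparing infima with a pointwise additive bound -/
lemma inf_le_inf_add_aux {α : Type*} [TopologicalSpace α] {Ω : Set α} (hne : Ω.Nonempty)
    (hcomp : IsCompact Ω) {g h : α → ℝ} (hg : ContinuousOn g Ω) (hh : ContinuousOn h Ω)
    {C : ℝ} (hC : ∀ y ∈ Ω, g y ≤ h y + C) :
    sInf (g '' Ω) ≤ sInf (h '' Ω) + C := by
  obtain ⟨y, hy, hmin⟩ := hcomp.exists_isMinOn hne hh
  have hbdd : BddBelow (g '' Ω) := (hcomp.image_of_continuousOn hg).bddBelow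
  have h1 : sInf (g '' Ω) ≤ g y := csInf_le hbdd ⟨y, hy, rfl⟩
  have h2 : sInf (h '' Ω) = h y := by
    apply le_antisymm (csInf_le (hcomp.image_of_continuousOn hh).bddBelow ⟨y, hy, rfl⟩)
    refine le_csInf ⟨h y, ⟨y, hy, rfl⟩⟩ ?_
    rintro _ ⟨z, hz, rfl⟩; exact hmin hz
  linarith [hC y hy]

/-- for a nonempty compact `Ω`, continuous `f` and `x ∈ Ω`:
(i) for `s, s' > 0`, `|T_s f (x) − T_{s'} f (x)| ≤ diam(Ω)²·|s−s'| / (2·min(s,s')²)`;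
(ii) `s ↦ T_s f (x)` is continuous on `[0,∞)`, and in particular `T_s f (x) → f(x)` as
`s → 0⁺`. -/
theorem stmt17 {d : ℕ} (Ω : Set (EuclideanSpace ℝ (Fin d)))
    (hne : Ω.Nonempty) (hcomp : IsCompact Ω)
    (f : EuclideanSpace ℝ (Fin d) → ℝ) (hf : ContinuousOn f Ω)
    (x : EuclideanSpace ℝ (Fin d)) (hx : x ∈ Ω) :
    (∀ s s' : ℝ, 0 < s → 0 < s' →
      |bellman Ω s f x - bellman Ω s' f x| ≤
        Metric.diam Ω ^ 2 * |s - s'| / (2 * min s s' ^ 2)) ∧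
    ContinuousOn (fun s : ℝ => bellman Ω s f x) (Set.Ici 0) ∧
    Tendsto (fun s : ℝ => bellman Ω s f x) (nhdsWithin 0 (Set.Ioi 0)) (nhds (f x)) := by
  set D := Metric.diam Ω with hDdef
  have hD : 0 ≤ D := Metric.diam_nonneg
  set g : ℝ → EuclideanSpace ℝ (Fin d) → ℝ := fun s y => ‖x - y‖ ^ 2 / (2 * s) + f y with hgdef
  have hgc : ∀ s : ℝ, ContinuousOn (g s) Ω := fun s =>
    (((continuous_const.sub continuous_id).norm.pow 2).div_const _).continuousOn.add hf
  have hbell : ∀ s : ℝ, s ≠ 0 → bellman Ω s f x = sInf (g s '' Ω) := fun s hs => if_neg hs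
  -- pointwise bound
  have hpt : ∀ s s' : ℝ, 0 < s → 0 < s' → ∀ y ∈ Ω,
      g s y ≤ g s' y + D ^ 2 * |s - s'| / (2 * min s s' ^ 2) := by
    intro s s' hs hs' y hy
    have hn : (0:ℝ) ≤ ‖x - y‖ ^ 2 := sq_nonneg _
    have hnD : ‖x - y‖ ^ 2 ≤ D ^ 2 := by
      have h1 : ‖x - y‖ ≤ D := by
        rw [← dist_eq_norm]
        exact Metric.dist_le_diam_of_mem hcomp.isBounded hx hy
      exact pow_le_pow_left₀ (norm_nonneg _) h1 2
    have hminpos : 0 < min s s' := lt_min hs hs'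
    have hmm : 2 * min s s' ^ 2 ≤ 2 * (s * s') := by
      have : min s s' ^ 2 ≤ s * s' := by
        rw [sq]
        exact mul_le_mul (min_le_left _ _) (min_le_right _ _) hminpos.le hs.le
      linarith
    have key : g s y - g s' y = ‖x - y‖ ^ 2 * (s' - s) / (2 * (s * s')) := by
      simp only [hgdef]
      field_simp
      ring
    have hnum : ‖x - y‖ ^ 2 * (s' - s) ≤ D ^ 2 * |s - s'| :=
      calc ‖x - y‖ ^ 2 * (s' - s) ≤ ‖x - y‖ ^ 2 * |s - s'| := by
            apply mul_le_mul_of_nonneg_left _ hn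
            rw [abs_sub_comm]; exact le_abs_self _
        _ ≤ D ^ 2 * |s - s'| := mul_le_mul_of_nonneg_right hnD (abs_nonneg _)
    have h2 : ‖x - y‖ ^ 2 * (s' - s) / (2 * (s * s')) ≤ D ^ 2 * |s - s'| / (2 * (s * s')) := by
      gcongr
    have h3 : D ^ 2 * |s - s'| / (2 * (s * s')) ≤ D ^ 2 * |s - s'| / (2 * min s s' ^ 2) := by
      gcongr
    linarith [key, h2, h3]
  -- part (i)
  have part1 : ∀ s s' : ℝ, 0 < s → 0 < s' →
      |bellman Ω s f x - bellman Ω s' f x| ≤ D ^ 2 * |s - s'| / (2 * min s s' ^ 2) := by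
    intro s s' hs hs'
    rw [hbell s hs.ne', hbell s' hs'.ne', abs_sub_le_iff]
    constructor
    · have := inf_le_inf_add_aux hne hcomp (hgc s) (hgc s') (hpt s s' hs hs')
      linarith
    · have := inf_le_inf_add_aux hne hcomp (hgc s') (hgc s) (hpt s' s hs' hs)
      rw [abs_sub_comm s' s, min_comm s' s] at this
      linarith
  -- part (iii): limit at 0⁺
  have part3 : Tendsto (fun s : ℝ => bellman Ω s f x) (nhdsWithin 0 (Set.Ioi 0))
      (nhds (f x)) := by
    rw [Metric.tendsto_nhds]
    intro ε hε
    -- upper bound : bellman ≤ f x for all s > 0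
    have hub : ∀ s : ℝ, 0 < s → bellman Ω s f x ≤ f x := by
      intro s hs
      rw [hbell s hs.ne']
      have : sInf (g s '' Ω) ≤ g s x :=
        csInf_le (hcomp.image_of_continuousOn (hgc s)).bddBelow ⟨x, hx, rfl⟩
      have hgx : g s x = f x := by simp [hgdef]
      linarith
    -- lower bound
    obtain ⟨δ, hδ, hδε⟩ := Metric.continuousWithinAt_iff.1 (hf x hx) (ε/2) (by linarith)
    obtain ⟨m, hm⟩ := (hcomp.image_of_continuousOn hf).bddBelow
    have hm' : ∀ y ∈ Ω, m ≤ f y := fun y hy => hm ⟨y, hy, rfl⟩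
    set s0 : ℝ := δ ^ 2 / (2 * (|f x - ε/2 - m| + 1)) with hs0def
    have hs0pos : 0 < s0 := by positivity
    have hlb : ∀ s : ℝ, 0 < s → s ≤ s0 → f x - ε/2 ≤ bellman Ω s f x := by
      intro s hs hss0
      rw [hbell s hs.ne']
      refine le_csInf (hne.image _) ?_
      rintro _ ⟨y, hy, rfl⟩
      by_cases hyd : dist y x < δ
      · have := hδε hy hyd
        have h1 : |f y - f x| < ε/2 := by rwa [Real.dist_eq] at this
        have h2 : (0:ℝ) ≤ ‖x - y‖ ^ 2 / (2 * s) := by positivity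
        have := abs_lt.1 h1
        simp only [hgdef]
        linarith [this.1]
      · push_neg at hyd
        have h1 : δ ^ 2 ≤ ‖x - y‖ ^ 2 := by
          have : δ ≤ ‖x - y‖ := by rw [← dist_eq_norm, dist_comm]; exact hyd
          exact pow_le_pow_left₀ hδ.le this 2
        have h2 : δ ^ 2 / (2 * s0) ≤ ‖x - y‖ ^ 2 / (2 * s) := by
          gcongr
        have h3 : δ ^ 2 / (2 * s0) = |f x - ε/2 - m| + 1 := by
          rw [hs0def]
          field_simp
        have h4 : f x - ε/2 - m ≤ |f x - ε/2 - m| + 1 := by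
          have := le_abs_self (f x - ε/2 - m); linarith
        have h5 : m ≤ f y := hm' y hy
        simp only [hgdef]
        linarith
    rw [eventually_nhdsWithin_iff]
    filter_upwards [Metric.ball_mem_nhds (0:ℝ) hs0pos] with s hball hs
    have hs' : 0 < s := hs
    have hss0 : s ≤ s0 := by
      have := mem_ball_iff_norm.1 hball
      rw [Real.norm_eq_abs] at this
      have := abs_lt.1 (by simpa using this)
      linarith [this.2]
    have h1 := hub s hs'
    have h2 := hlb s hs' hss0
    rw [Real.dist_eq, abs_lt]
    constructor <;> linarith
  -- part (ii): continuity on [0, ∞)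
  have part2 : ContinuousOn (fun s : ℝ => bellman Ω s f x) (Set.Ici 0) := by
    intro s hs
    rcases eq_or_lt_of_le (Set.mem_Ici.1 hs) with h0 | hpos
    · -- s = 0
      subst h0
      have h00 : bellman Ω 0 f x = f x := if_pos rfl
      have key : Tendsto (fun s : ℝ => bellman Ω s f x) (nhdsWithin 0 (Set.Ici 0))
          (nhds (f x)) := by
        rw [← Set.Ioi_insert, nhdsWithin_insert]
        refine Tendsto.sup ?_ part3
        have := tendsto_pure_nhds (fun s : ℝ => bellman Ω s f x) 0
        rwa [h00] at this
      unfold ContinuousWithinAt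
      convert key using 2
    · -- s > 0 : locally Lipschitz on Ici (s/2)
      have hK : (0:ℝ) ≤ D ^ 2 / (2 * (s/2) ^ 2) := by positivity
      have hlip : LipschitzOnWith (Real.toNNReal (D ^ 2 / (2 * (s/2) ^ 2)))
          (fun t : ℝ => bellman Ω t f x) (Set.Ici (s/2)) := by
        rw [lipschitzOnWith_iff_dist_le_mul]
        intro a ha b hb
        have ha' : 0 < a := lt_of_lt_of_le (by linarith) (Set.mem_Ici.1 ha)
        have hb' : 0 < b := lt_of_lt_of_le (by linarith) (Set.mem_Ici.1 hb)
        have hmin : s/2 ≤ min a b := le_min (Set.mem_Ici.1 ha) (Set.mem_Ici.1 hb)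
        have hminpos : 0 < min a b := lt_min ha' hb'
        have hbd := part1 a b ha' hb'
        have h1 : D ^ 2 * |a - b| / (2 * min a b ^ 2) ≤
            D ^ 2 * |a - b| / (2 * (s/2) ^ 2) := by
          gcongr
        rw [Real.dist_eq, Real.dist_eq, Real.coe_toNNReal _ hK]
        calc |bellman Ω a f x - bellman Ω b f x|
            ≤ D ^ 2 * |a - b| / (2 * min a b ^ 2) := hbd
          _ ≤ D ^ 2 * |a - b| / (2 * (s/2) ^ 2) := h1
          _ = D ^ 2 / (2 * (s/2) ^ 2) * |a - b| := by ring
      have hcont : ContinuousAt (fun t : ℝ => bellman Ω t f x) s := by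
        apply hlip.continuousOn.continuousAt
        exact Ici_mem_nhds (by linarith)
      exact hcont.continuousWithinAt
  exact ⟨part1, part2, part3⟩
end
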